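/- Let N = 2^t with t ≥ 1, 0 ≤ θ < 2π, v_k = exp(i(θ + 2πk/N)) for k = 0,…,N−1, and V_N = [v_k^l]_{k,l=0}^{N−1}. Then V_N = P_N^T · diag(V_{N/2}, V_{N/2}) · [[I_{N/2}, c·I_{N/2}],[Ḋ_{N/2}, −c·Ḋ_{N/2}]], where V_{N/2} = [v_{2k}^l]_{k,l=0}^{N/2−1}, Ḋ_{N/2} = diag(exp(2πil/N))_{l=0}^{N/2−1}, c = exp(iθN/2), and P_N is the even–odd permutation matrix. -/

import Mathlib

open Matrix Complex

/-- The even–odd permutation matrix `P_N` of size `N = m + m`: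
`(P x)_k = x_{2k}` for `0 ≤ k < m` and `(P x)_{m+k} = x_{2k+1}` for `0 ≤ k < m`. -/
noncomputable def evenOddPerm (m : ℕ) : Matrix (Fin (m + m)) (Fin (m + m)) ℂ :=
  Matrix.of fun i j =>
    if (j : ℕ) = (if (i : ℕ) < m then 2 * (i : ℕ) else 2 * ((i : ℕ) - m) + 1) then 1 else 0

private lemma exp_pow_m (m : ℕ) (hm : ((m : ℂ) + (m : ℂ)) ≠ 0) (θ : ℝ) (k : ℕ) :
    Complex.exp (Complex.I * ((θ : ℂ) + 2 * (Real.pi : ℂ) * (k : ℂ) / ((m : ℂ) + (m : ℂ)))) ^ m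
      = (-1 : ℂ) ^ k * Complex.exp (Complex.I * (θ : ℂ) * (m : ℂ)) := by
  rw [← Complex.exp_nat_mul, ← Complex.exp_pi_mul_I, ← Complex.exp_nat_mul, ← Complex.exp_add]
  congr 1
  have hm' : (m : ℂ) ≠ 0 := fun h => hm (by rw [h]; ring)
  field_simp
  ring

private lemma odd_step (m : ℕ) (hm : ((m : ℂ) + (m : ℂ)) ≠ 0) (θ : ℝ) (a l : ℕ) :
    Complex.exp (Complex.I * ((θ : ℂ) + 2 * (Real.pi : ℂ) * ((2 * a + 1 : ℕ) : ℂ) / ((m : ℂ) + (m : ℂ)))) ^ l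
      = Complex.exp (Complex.I * ((θ : ℂ) + 2 * (Real.pi : ℂ) * ((2 * a : ℕ) : ℂ) / ((m : ℂ) + (m : ℂ)))) ^ l
        * Complex.exp (2 * (Real.pi : ℂ) * Complex.I * (l : ℂ) / ((m : ℂ) + (m : ℂ))) := by
  rw [← Complex.exp_nat_mul, ← Complex.exp_nat_mul, ← Complex.exp_add]
  congr 1
  push_cast
  field_simp
  ring

/-- Two-factor form of the radix-2 factorization: for the Vandermonde matrix on equally
spaced counterclockwise unit-circle nodes with `N = 2 ^ t = m + m`,
`V_N = P_Nᵀ · diag(V_{N/2}, V_{N/2}) · [[I, c·I], [Ḋ, −c·Ḋ]]` with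
`Ḋ = diag(exp(2πil/N))` and `c = exp(iθN/2)`. -/
theorem vandermonde_radix2_two_factor
    (t : ℕ) (ht : 1 ≤ t) (m : ℕ) (hm : m = 2 ^ (t - 1))
    (θ : ℝ) (hθ0 : 0 ≤ θ) (hθ1 : θ < 2 * Real.pi)
    (v : ℕ → ℂ)
    (hv : ∀ k : ℕ, v k =
      Complex.exp (Complex.I * ((θ : ℂ) + 2 * (Real.pi : ℂ) * (k : ℂ) / ((m : ℂ) + (m : ℂ))))) :
    (Matrix.of fun k l : Fin (m + m) => v (k : ℕ) ^ (l : ℕ)) =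
      (evenOddPerm m)ᵀ *
      (Matrix.reindex finSumFinEquiv finSumFinEquiv
        (Matrix.fromBlocks
          (Matrix.of fun k l : Fin m => v (2 * (k : ℕ)) ^ (l : ℕ)) 0 0
          (Matrix.of fun k l : Fin m => v (2 * (k : ℕ)) ^ (l : ℕ)))) *
      (Matrix.reindex finSumFinEquiv finSumFinEquiv
        (Matrix.fromBlocks
          (1 : Matrix (Fin m) (Fin m) ℂ)
          (Complex.exp (Complex.I * (θ : ℂ) * (m : ℂ)) • (1 : Matrix (Fin m) (Fin m) ℂ))
          (Matrix.diagonal (fun l : Fin m =>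
            Complex.exp (2 * (Real.pi : ℂ) * Complex.I * ((l : ℕ) : ℂ) / ((m : ℂ) + (m : ℂ)))))
          (-(Complex.exp (Complex.I * (θ : ℂ) * (m : ℂ)) •
            Matrix.diagonal (fun l : Fin m =>
              Complex.exp (2 * (Real.pi : ℂ) * Complex.I * ((l : ℕ) : ℂ) / ((m : ℂ) + (m : ℂ)))))))) := by
  have hm1 : 1 ≤ m := by rw [hm]; exact Nat.one_le_two_pow
  have hm0 : ((m : ℂ) + (m : ℂ)) ≠ 0 := by
    have h : (m : ℂ) ≠ 0 := Nat.cast_ne_zero.mpr (by omega)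
    intro hh
    apply h
    linear_combination hh / 2
  set c : ℂ := Complex.exp (Complex.I * (θ : ℂ) * (m : ℂ)) with hc
  set D : Matrix (Fin m) (Fin m) ℂ := Matrix.diagonal (fun l : Fin m =>
      Complex.exp (2 * (Real.pi : ℂ) * Complex.I * ((l : ℕ) : ℂ) / ((m : ℂ) + (m : ℂ)))) with hD
  set A : Matrix (Fin m) (Fin m) ℂ :=
    Matrix.of (fun k l : Fin m => v (2 * (k : ℕ)) ^ (l : ℕ)) with hA
  rw [Matrix.mul_assoc]
  have key : (Matrix.reindex finSumFinEquiv finSumFinEquiv (Matrix.fromBlocks A 0 0 A)) *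
      (Matrix.reindex finSumFinEquiv finSumFinEquiv (Matrix.fromBlocks 1 (c • 1) D (-(c • D)))) =
      Matrix.reindex finSumFinEquiv finSumFinEquiv
        (Matrix.fromBlocks A (c • A) (A * D) (-(c • (A * D)))) := by
    rw [Matrix.reindex_apply, Matrix.reindex_apply, Matrix.reindex_apply,
      Matrix.submatrix_mul_equiv, Matrix.fromBlocks_multiply]
    congr 1 <;> simp [Matrix.mul_smul]
  rw [key]
  ext k l
  rw [Matrix.mul_apply]
  rcases Nat.even_or_odd (k : ℕ) with ⟨a, ha⟩ | ⟨a, ha⟩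
  · have ham : a < m := by omega
    rw [Fintype.sum_eq_single (Fin.castAdd m ⟨a, ham⟩)]
    · have h1 : (evenOddPerm m)ᵀ k (Fin.castAdd m ⟨a, ham⟩) = 1 := by
        simp [evenOddPerm, Matrix.transpose_apply, ham]
        omega
      rw [h1, one_mul, Matrix.reindex_apply, Matrix.submatrix_apply,
        finSumFinEquiv_symm_apply_castAdd]
      rcases lt_or_ge (l : ℕ) m with hl | hl
      · have hle : l = Fin.castAdd m ⟨(l : ℕ), hl⟩ := by ext; simp
        rw [hle, finSumFinEquiv_symm_apply_castAdd, Matrix.fromBlocks_apply₁₁]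
        show v (k : ℕ) ^ ((l : ℕ)) = v (2 * a) ^ ((l : ℕ))
        rw [ha, two_mul]
      · have hlm : (l : ℕ) - m < m := by omega
        have hle : l = Fin.natAdd m ⟨(l : ℕ) - m, hlm⟩ := by ext; simp; omega
        rw [hle, finSumFinEquiv_symm_apply_natAdd, Matrix.fromBlocks_apply₁₂,
          Matrix.smul_apply]
        show v (k : ℕ) ^ (m + ((l : ℕ) - m)) = c • (v (2 * a) ^ ((l : ℕ) - m))
        rw [pow_add, hv, hv, exp_pow_m m hm0, ha, smul_eq_mul]
        have : ((a + a : ℕ) : ℂ) = ((2 * a : ℕ) : ℂ) := by push_cast; ring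
        rw [this, Even.neg_one_pow ⟨a, rfl⟩, one_mul]
    · intro i hi
      rcases eq_or_ne ((evenOddPerm m)ᵀ k i) 0 with h0 | h0
      · rw [h0, zero_mul]
      · exfalso
        simp only [evenOddPerm, Matrix.transpose_apply, Matrix.of_apply,
          ite_eq_right_iff] at h0
        apply hi
        ext
        simp only [Fin.coe_castAdd]
        by_cases him : (i : ℕ) < m <;> simp [him] at h0 <;> omega
  · have ham : a < m := by omega
    have hmam : m + a < m + m := by omega
    rw [Fintype.sum_eq_single (Fin.natAdd m ⟨a, ham⟩)]
    · have h1 : (evenOddPerm m)ᵀ k (Fin.natAdd m ⟨a, ham⟩) = 1 := by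
        simp [evenOddPerm, Matrix.transpose_apply]
        omega
      rw [h1, one_mul, Matrix.reindex_apply, Matrix.submatrix_apply,
        finSumFinEquiv_symm_apply_natAdd]
      rcases lt_or_ge (l : ℕ) m with hl | hl
      · have hle : l = Fin.castAdd m ⟨(l : ℕ), hl⟩ := by ext; simp
        rw [hle, finSumFinEquiv_symm_apply_castAdd, Matrix.fromBlocks_apply₂₁,
          Matrix.mul_diagonal]
        show v (k : ℕ) ^ ((l : ℕ)) = v (2 * a) ^ ((l : ℕ)) *
          Complex.exp (2 * (Real.pi : ℂ) * Complex.I * ((l : ℕ) : ℂ) / ((m : ℂ) + (m : ℂ)))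
        rw [ha, hv, hv]
        exact odd_step m hm0 θ a (l : ℕ)
      · have hlm : (l : ℕ) - m < m := by omega
        have hle : l = Fin.natAdd m ⟨(l : ℕ) - m, hlm⟩ := by ext; simp; omega
        rw [hle, finSumFinEquiv_symm_apply_natAdd, Matrix.fromBlocks_apply₂₂,
          Matrix.neg_apply, Matrix.smul_apply, Matrix.mul_diagonal]
        show v (k : ℕ) ^ (m + ((l : ℕ) - m)) = -(c • (v (2 * a) ^ ((l : ℕ) - m) *
          Complex.exp (2 * (Real.pi : ℂ) * Complex.I * (((l : ℕ) - m : ℕ) : ℂ) / ((m : ℂ) + (m : ℂ)))))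
        rw [pow_add, hv, hv, exp_pow_m m hm0, ha, smul_eq_mul]
        rw [odd_step m hm0 θ a ((l : ℕ) - m)]
        have h2 : ((2 * a + 1 : ℕ) : ℂ) = ((2 * a : ℕ) : ℂ) + 1 := by push_cast; ring
        rw [Odd.neg_one_pow ⟨a, rfl⟩]
        ring
    · intro i hi
      rcases eq_or_ne ((evenOddPerm m)ᵀ k i) 0 with h0 | h0
      · rw [h0, zero_mul]
      · exfalso
        simp only [evenOddPerm, Matrix.transpose_apply, Matrix.of_apply,
          ite_eq_right_iff] at h0
        apply hi
        ext
        simp only [Fin.coe_natAdd]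
        by_cases him : (i : ℕ) < m <;> simp [him] at h0 <;> omega
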